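/- In the setting of the Zariski–van Kampen presentation with slopes: with hypotheses as in the previous statement (braid monodromies m₁,...,m_r ∈ B₃ fixing ρ, composing to conjugation by ρ^{-k}, and slopes κ₁,...,κ_r), modulo all but one of the twisted braid relations m̃ᵢ = id, the slopes cyclically commute: κ_r⋯κ₂κ₁ = κ_{d-1}⋯κ₁κ_r⋯κ_d in the quotient group, for each d = 2, ..., r. In particular, when only two slopes κ₁, κ₂ are nontrivial, κ₂κ₁ = κ₁κ₂ in the quotient and the order of the slopes in the relation at infinity ρ^k = κ₂κ₁ is irrelevant. -/

import Mathlib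

/-- Modulo all but one of the twisted braid relations and the relation at
infinity, the slopes cyclically commute: any cyclic rotation of the product
`κ_r ⋯ κ₁` has the same image in the quotient group.  In particular, with only
two nontrivial slopes their order in the relation at infinity is irrelevant. -/
theorem slopes_cyclically_commute (r k : ℕ)
    (m : Fin r → MulAut (FreeGroup (Fin 3))) (κ : Fin r → FreeGroup (Fin 3))
    {G : Type*} [Group G] (π : FreeGroup (Fin 3) →* G)
    (hsurj : Function.Surjective π)
    (ρ : FreeGroup (Fin 3))
    (hρ : ρ = FreeGroup.of 0 * FreeGroup.of 1 * FreeGroup.of 2)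
    (hfix : ∀ i, m i ρ = ρ)
    (hcomp : ∀ x, ((List.ofFn m).reverse.prod : MulAut (FreeGroup (Fin 3))) x =
      ρ ^ k * x * (ρ ^ k)⁻¹)
    (hinf : π ((List.ofFn κ).reverse.prod) = π (ρ ^ k))
    (d : Fin r)
    (hrel : ∀ i, i ≠ d → ∀ x, π (κ i * x * (κ i)⁻¹) = π (m i x)) :
    ∀ n : ℕ,
      π (((List.ofFn κ).reverse.rotate n).prod) = π ((List.ofFn κ).reverse.prod) := by
  intro n
  set l : List (FreeGroup (Fin 3)) := List.ofFn κ with hl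
  -- Step 1: for i ≠ d, π (κ i) commutes with π ρ
  have h1 : ∀ i : Fin r, i ≠ d → Commute (π (κ i)) (π ρ) := by
    intro i hi
    have h := hrel i hi ρ
    rw [hfix] at h
    simp only [map_mul, map_inv] at h
    have h' : π (κ i) * π ρ = π ρ * π (κ i) := by
      have := congrArg (· * π (κ i)) h
      simpa [mul_assoc] using this
    exact h'
  -- helper: a product of elements commuting with π ρ commutes with π ρ
  have commProd : ∀ t : List (FreeGroup (Fin 3)),
      (∀ x ∈ t, Commute (π x) (π ρ)) → Commute (π t.prod) (π ρ) := by
    intro t ht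
    rw [map_list_prod]
    refine (Commute.list_prod_right _ _ ?_).symm
    intro x hx
    obtain ⟨y, hy, rfl⟩ := List.mem_map.mp hx
    exact (ht y hy).symm
  have hlen : l.length = r := by simp [hl]
  have hd : (d : ℕ) < l.length := by rw [hlen]; exact d.isLt
  -- splitting of l at position d
  have hsplit : l = l.take d ++ κ d :: l.drop ((d : ℕ) + 1) := by
    conv_lhs => rw [← List.take_append_drop (d : ℕ) l]
    congr 1
    rw [List.drop_eq_getElem_cons hd]
    congr 1
    simp [hl]
  -- elements of the two sides commute with π ρ
  have htake : ∀ x ∈ l.take (d : ℕ), Commute (π x) (π ρ) := by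
    intro x hx
    obtain ⟨j, hj, hxe⟩ := List.mem_iff_getElem.mp hx
    have hj' : j < (d : ℕ) := lt_of_lt_of_le hj (by simp [List.length_take])
    have hjr : j < r := lt_of_lt_of_le hj' (le_of_lt d.isLt)
    have hx' : x = κ ⟨j, hjr⟩ := by rw [← hxe]; simp [hl]
    subst hx'
    exact h1 _ (by intro hc; exact absurd (congrArg Fin.val hc) (Nat.ne_of_lt hj'))
  have hdrop : ∀ x ∈ l.drop ((d : ℕ) + 1), Commute (π x) (π ρ) := by
    intro x hx
    obtain ⟨j, hj, hxe⟩ := List.mem_iff_getElem.mp hx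
    rw [List.getElem_drop] at hxe
    have hjl : (d : ℕ) + 1 + j < l.length := by
      have := hj; simp only [List.length_drop] at this; omega
    have hjr : (d : ℕ) + 1 + j < r := by rwa [hlen] at hjl
    have hx' : x = κ ⟨(d : ℕ) + 1 + j, hjr⟩ := by rw [← hxe]; simp [hl]
    subst hx'
    refine h1 _ (fun hc => ?_)
    have := congrArg Fin.val hc
    simp only [] at this
    omega
  -- Step 2: π (κ d) also commutes with π ρ
  have h2 : Commute (π (κ d)) (π ρ) := by
    have hrev : l.reverse =
        (l.drop ((d : ℕ) + 1)).reverse ++ κ d :: (l.take (d : ℕ)).reverse := by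
      conv_lhs => rw [hsplit]
      simp
    have hA : Commute (π ((l.drop ((d : ℕ) + 1)).reverse.prod)) (π ρ) :=
      commProd _ (fun x hx => hdrop x (List.mem_reverse.mp hx))
    have hB : Commute (π ((l.take (d : ℕ)).reverse.prod)) (π ρ) :=
      commProd _ (fun x hx => htake x (List.mem_reverse.mp hx))
    set A := π ((l.drop ((d : ℕ) + 1)).reverse.prod)
    set B := π ((l.take (d : ℕ)).reverse.prod)
    have heq : (π ρ) ^ k = A * (π (κ d) * B) := by
      rw [← map_pow, ← hinf, hrev]
      simp [A, B, List.prod_cons, map_mul]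
    have hκd : π (κ d) = A⁻¹ * (π ρ) ^ k * B⁻¹ := by
      rw [heq]; group
    rw [hκd]
    exact ((hA.inv_left.mul_left ((Commute.refl (π ρ)).pow_left k)).mul_left
      hB.inv_left).symm.symm
  -- Step 3: every element of l commutes with π ρ
  have hall : ∀ x ∈ l, Commute (π x) (π ρ) := by
    intro x hx
    obtain ⟨i, rfl⟩ := (List.mem_ofFn (f := κ)).mp (hl ▸ hx)
    by_cases hi : i = d
    · subst hi; exact h2
    · exact h1 i hi
  -- Step 4: rotations
  rcases Nat.eq_zero_or_pos l.reverse.length with h0 | hpos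
  · rw [List.length_eq_zero_iff] at h0
    rw [h0]
    simp
  · rw [← List.rotate_mod]
    set n' := n % l.reverse.length with hn'
    have hle : n' ≤ l.reverse.length := le_of_lt (Nat.mod_lt _ hpos)
    rw [List.rotate_eq_drop_append_take hle, List.prod_append, map_mul]
    have hT : Commute (π ((l.reverse.take n').prod)) (π ρ) :=
      commProd _ (fun x hx =>
        hall x (List.mem_reverse.mp (List.mem_of_mem_take hx)))
    have hTD : π ((l.reverse.take n').prod) * π ((l.reverse.drop n').prod)
        = (π ρ) ^ k := by
      rw [← map_mul, ← List.prod_append, List.take_append_drop, hinf, map_pow]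
    have hc : Commute (π ((l.reverse.take n').prod))
        (π ((l.reverse.take n').prod) * π ((l.reverse.drop n').prod)) := by
      rw [hTD]; exact hT.pow_right k
    have hcomm : π ((l.reverse.take n').prod) * π ((l.reverse.drop n').prod)
        = π ((l.reverse.drop n').prod) * π ((l.reverse.take n').prod) := by
      have h := hc.eq
      rw [mul_assoc] at h
      exact mul_left_cancel h
    conv_rhs => rw [← List.take_append_drop n' l.reverse, List.prod_append, map_mul]
    exact hcomm.symm
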